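/- Let SNR > 0, H ∈ ℝ^{N×M}, let (I_M + SNR·Hᵀ·H)⁻¹ = G·Gᵀ be the Cholesky decomposition, and suppose A ∈ ℤ^{M×M} is unimodular and the columns f_1,…,f_M of F = Gᵀ·Aᵀ satisfy the Korkin–Zolotarev shortest-vector conditions: for every i = 1,…,M and every z ∈ ℤ^M with P_i(Gᵀz) ≠ 0, ‖P_i(f_i)‖ ≤ ‖P_i(Gᵀz)‖, where P_i denotes orthogonal projection onto the orthogonal complement of span(f_1,…,f_{i−1}). Then for every full-rank integer matrix Ã ∈ ℤ^{M×M} and every m = 1,…,M, max_{k=1,…,m} ℓ_kk(A)² ≤ max_{k=1,…,m} ℓ_kk(Ã)², where for a full-rank integer matrix B, ℓ_kk(B) denote the diagonal entries of the lower-triangular Cholesky factor of B·(I_M + SNR·Hᵀ·H)⁻¹·Bᵀ. -/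

import Mathlib

/-- View a plain vector in `Fin M → ℝ` as an element of Euclidean space. -/
noncomputable def toE {M : ℕ} (v : Fin M → ℝ) : EuclideanSpace ℝ (Fin M) :=
  (EuclideanSpace.equiv (Fin M) ℝ).symm v

/-- `projPerp f i x` is the orthogonal projection of `x` onto the orthogonal complement of
`span(f_1, …, f_{i-1})`. -/
noncomputable def projPerp {M : ℕ} (f : Fin M → EuclideanSpace ℝ (Fin M)) (i : Fin M)
    (x : EuclideanSpace ℝ (Fin M)) : EuclideanSpace ℝ (Fin M) :=
  (Submodule.orthogonalProjection (Submodule.span ℝ (f '' {j | j < i}))ᗮ x : EuclideanSpace ℝ (Fin M))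

open scoped RealInnerProductSpace

lemma gram_rows {M : ℕ} (B : Matrix (Fin M) (Fin M) ℝ) (i j : Fin M) :
    ⟪toE (B i), toE (B j)⟫ = (B * B.transpose) i j := by
  simp [toE, Matrix.mul_apply, PiLp.inner_apply, RCLike.inner_apply, EuclideanSpace.equiv]
  exact Finset.sum_congr rfl fun _ _ => mul_comm _ _

lemma mulVec_row {M : ℕ} (G : Matrix (Fin M) (Fin M) ℝ) (B : Matrix (Fin M) (Fin M) ℤ) (i : Fin M) :
    (G.transpose.mulVec (fun t => ((B i t : ℤ) : ℝ))) = ((B.map (Int.cast : ℤ → ℝ)) * G) i := by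
  funext t
  simp [Matrix.mulVec, Matrix.mul_apply, dotProduct, Matrix.map_apply, mul_comm]


lemma chol_diag {M : ℕ} (f : Fin M → EuclideanSpace ℝ (Fin M))
    (L : Matrix (Fin M) (Fin M) ℝ)
    (hLtri : ∀ a b : Fin M, a < b → L a b = 0)
    (hLdiag : ∀ a : Fin M, 0 < L a a)
    (hGram : ∀ i j, ⟪f i, f j⟫ = (L * L.transpose) i j)
    (k : Fin M) :
    ‖projPerp f k (f k)‖ = L k k := by
  classical
  have hBT : L.BlockTriangular OrderDual.toDual := by
    intro i j h
    exact hLtri i j h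
  have hdet : L.det = ∏ i, L i i := Matrix.det_of_lowerTriangular L hBT
  have hUnit : IsUnit L.det := by
    rw [hdet]
    exact (Finset.prod_pos (fun i _ => hLdiag i)).ne'.isUnit
  haveI : Invertible L := L.invertibleOfIsUnitDet hUnit
  have hinvBT : (L⁻¹).BlockTriangular OrderDual.toDual :=
    Matrix.blockTriangular_inv_of_blockTriangular hBT
  set P : Matrix (Fin M) (Fin M) ℝ := L * L.transpose with hP
  set u : Fin M → EuclideanSpace ℝ (Fin M) := fun t => ∑ i, L⁻¹ t i • f i with hu
  have hmat : L⁻¹ * P * (L⁻¹).transpose = 1 := by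
    rw [hP, Matrix.transpose_nonsing_inv, ← Matrix.mul_assoc,
      Matrix.nonsing_inv_mul L hUnit, Matrix.one_mul,
      Matrix.mul_nonsing_inv _ (by rwa [Matrix.det_transpose])]
  have huinner : ∀ s t, ⟪u s, u t⟫ = if s = t then (1 : ℝ) else 0 := by
    intro s t
    have h2 : ⟪u s, u t⟫ = (L⁻¹ * P * (L⁻¹).transpose) s t := by
      simp only [hu, sum_inner, real_inner_smul_left, inner_sum, real_inner_smul_right, hGram,
        Matrix.mul_apply, Matrix.transpose_apply, Finset.sum_mul, Finset.mul_sum]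
      refine Finset.sum_congr rfl fun i _ => Finset.sum_congr rfl fun j _ => by ring
    rw [h2, hmat, Matrix.one_apply]
  have honu : Orthonormal ℝ u := orthonormal_iff_ite.mpr huinner
  have hfu : ∀ i, f i = ∑ t, L i t • u t := by
    intro i
    have h1 : L * L⁻¹ = 1 := Matrix.mul_nonsing_inv L hUnit
    calc f i = ∑ j, ((L * L⁻¹) i j) • f j := by rw [h1]; simp [Matrix.one_apply]
    _ = ∑ j, ∑ t, (L i t * L⁻¹ t j) • f j := by
        congr 1; funext j; rw [Matrix.mul_apply, Finset.sum_smul]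
    _ = ∑ t, ∑ j, (L i t * L⁻¹ t j) • f j := Finset.sum_comm
    _ = ∑ t, L i t • u t := by simp [hu, Finset.smul_sum, smul_smul]
  set V : Submodule ℝ (EuclideanSpace ℝ (Fin M)) := Submodule.span ℝ (f '' {j | j < k}) with hV
  have hukV : u k ∈ Vᗮ := by
    rw [Submodule.mem_orthogonal]
    intro y hy
    induction hy using Submodule.span_induction with
    | mem x hx =>
      obtain ⟨j, hj, rfl⟩ := hx
      have : ⟪f j, u k⟫ = L j k := by
        rw [hfu j, sum_inner]
        have : ∀ t, ⟪L j t • u t, u k⟫ = if t = k then L j t else 0 := by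
          intro t
          rw [real_inner_smul_left, huinner t k]
          by_cases h : t = k <;> simp [h]
        simp only [this, Finset.sum_ite_eq' Finset.univ k, Finset.mem_univ, if_true]
      rw [this]
      exact hLtri j k hj
    | zero => simp
    | add x y _ _ hx hy => rw [inner_add_left, hx, hy, add_zero]
    | smul a x _ hx => rw [real_inner_smul_left, hx, mul_zero]
  have hutV : ∀ t, t < k → u t ∈ V := by
    intro t ht
    apply Submodule.sum_mem
    intro i _
    by_cases hit : t < i
    · have : L⁻¹ t i = 0 := hinvBT (by exact_mod_cast hit)
      rw [this, zero_smul]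
      exact Submodule.zero_mem V
    · exact Submodule.smul_mem _ _ (Submodule.subset_span
        ⟨i, lt_of_le_of_lt (not_lt.1 hit) ht, rfl⟩)
  set v : EuclideanSpace ℝ (Fin M) := f k - L k k • u k with hvdef
  have hvV : v ∈ V := by
    have : v = ∑ t ∈ Finset.univ.erase k, L k t • u t := by
      rw [hvdef, hfu k, ← Finset.add_sum_erase _ _ (Finset.mem_univ k)]
      abel
    rw [this]
    apply Submodule.sum_mem
    intro t ht
    rcases lt_or_gt_of_ne (Finset.ne_of_mem_erase ht) with h | h
    · exact Submodule.smul_mem _ _ (hutV t h)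
    · rw [hLtri k t h, zero_smul]; exact Submodule.zero_mem V
  have hproj : projPerp f k (f k) = L k k • u k := by
    have hfk : f k = v + L k k • u k := by rw [hvdef]; abel
    show ((Submodule.orthogonalProjectionOnto Vᗮ (f k) : EuclideanSpace ℝ (Fin M))) = L k k • u k
    rw [hfk, map_add, map_smul,
      Submodule.orthogonalProjectionOnto_apply_of_mem_orthogonal
        (Submodule.le_orthogonal_orthogonal V hvV),
      Submodule.orthogonalProjectionOnto_mem_subspace_eq_self (⟨u k, hukV⟩ : Vᗮ)]
    simp
  rw [hproj, norm_smul, honu.1 k]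
  simp [abs_of_pos (hLdiag k)]

theorem kz_shortest_vector_partial_max_optimality {M N : ℕ}
    (SNR : ℝ) (hSNR : 0 < SNR)
    (H : Matrix (Fin N) (Fin M) ℝ)
    (G : Matrix (Fin M) (Fin M) ℝ)
    (hGtri : ∀ i j : Fin M, i < j → G i j = 0)
    (hGdiag : ∀ i : Fin M, 0 < G i i)
    (hGchol : ((1 : Matrix (Fin M) (Fin M) ℝ) + SNR • (H.transpose * H))⁻¹ = G * G.transpose)
    -- A is unimodular
    (A : Matrix (Fin M) (Fin M) ℤ) (hA : A.det = 1 ∨ A.det = -1)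
    -- f_i are the columns of F = Gᵀ Aᵀ, i.e. f_i = Gᵀ a_i with a_iᵀ the i-th row of A
    (f : Fin M → EuclideanSpace ℝ (Fin M))
    (hf : ∀ i, f i = toE ((G.transpose).mulVec (fun t => ((A i t : ℤ) : ℝ))))
    -- the KZ shortest-vector conditions
    (hKZ1 : ∀ (i : Fin M) (z : Fin M → ℤ),
      projPerp f i (toE ((G.transpose).mulVec (fun t => (z t : ℝ)))) ≠ 0 →
      ‖projPerp f i (f i)‖ ≤ ‖projPerp f i (toE ((G.transpose).mulVec (fun t => (z t : ℝ))))‖)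
    -- L is the Cholesky factor associated with A
    (L : Matrix (Fin M) (Fin M) ℝ)
    (hLtri : ∀ a b : Fin M, a < b → L a b = 0)
    (hLdiag : ∀ a : Fin M, 0 < L a a)
    (hLchol : (A.map (Int.cast : ℤ → ℝ))
        * ((1 : Matrix (Fin M) (Fin M) ℝ) + SNR • (H.transpose * H))⁻¹
        * (A.map (Int.cast : ℤ → ℝ)).transpose = L * L.transpose) :
    ∀ (Atil : Matrix (Fin M) (Fin M) ℤ), Atil.det ≠ 0 →
    ∀ (Ltil : Matrix (Fin M) (Fin M) ℝ),
      (∀ a b : Fin M, a < b → Ltil a b = 0) →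
      (∀ a : Fin M, 0 < Ltil a a) →
      (Atil.map (Int.cast : ℤ → ℝ))
          * ((1 : Matrix (Fin M) (Fin M) ℝ) + SNR • (H.transpose * H))⁻¹
          * (Atil.map (Int.cast : ℤ → ℝ)).transpose = Ltil * Ltil.transpose →
    ∀ m : Fin M,
      (Finset.Iic m).sup' ⟨m, Finset.mem_Iic.mpr le_rfl⟩ (fun k => (L k k)^2)
        ≤ (Finset.Iic m).sup' ⟨m, Finset.mem_Iic.mpr le_rfl⟩ (fun k => (Ltil k k)^2) := by
  classical
  intro Atil hAtil Ltil hLttri hLtdiag hLtchol m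
  set Ar : Matrix (Fin M) (Fin M) ℝ := A.map (Int.cast : ℤ → ℝ) with hAr
  set Atr : Matrix (Fin M) (Fin M) ℝ := Atil.map (Int.cast : ℤ → ℝ) with hAtr
  -- Gram matrix facts
  have hGramL : ∀ i j, ⟪f i, f j⟫ = (L * L.transpose) i j := by
    intro i j
    rw [hf i, hf j, mulVec_row, mulVec_row, gram_rows]
    rw [Matrix.transpose_mul, show Ar * G * (G.transpose * Ar.transpose)
      = Ar * (G * G.transpose) * Ar.transpose by rw [Matrix.mul_assoc, Matrix.mul_assoc,
        Matrix.mul_assoc], ← hGchol, hLchol]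
  set ftil : Fin M → EuclideanSpace ℝ (Fin M) :=
    fun i => toE ((G.transpose).mulVec (fun t => ((Atil i t : ℤ) : ℝ))) with hftil
  have hftil' : ∀ i, ftil i = toE ((Atr * G) i) := by
    intro i; rw [hftil]; simp only [mulVec_row]; rfl
  have hGramLt : ∀ i j, ⟪ftil i, ftil j⟫ = (Ltil * Ltil.transpose) i j := by
    intro i j
    rw [hftil' i, hftil' j, gram_rows]
    rw [Matrix.transpose_mul, show Atr * G * (G.transpose * Atr.transpose)
      = Atr * (G * G.transpose) * Atr.transpose by rw [Matrix.mul_assoc, Matrix.mul_assoc,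
        Matrix.mul_assoc], ← hGchol, hLtchol]
  -- diagonal entries are Gram–Schmidt norms
  have hLd : ∀ k, L k k = ‖projPerp f k (f k)‖ :=
    fun k => (chol_diag f L hLtri hLdiag hGramL k).symm
  have hLtd : ∀ k, Ltil k k = ‖projPerp ftil k (ftil k)‖ :=
    fun k => (chol_diag ftil Ltil hLttri hLtdiag hGramLt k).symm
  -- linear independence of the rows ftil
  have hGBT : G.BlockTriangular OrderDual.toDual := fun i j h => hGtri i j h
  have hGdet : G.det ≠ 0 := by
    rw [Matrix.det_of_lowerTriangular G hGBT]
    exact (Finset.prod_pos (fun i _ => hGdiag i)).ne'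
  have hAtrdet : Atr.det ≠ 0 := by
    have : Atr.det = ((Atil.det : ℤ) : ℝ) := by
      rw [hAtr, show Atil.map (Int.cast : ℤ → ℝ) = (Int.castRingHom ℝ).mapMatrix Atil from rfl,
        ← RingHom.map_det]
      rfl
    rw [this]
    exact_mod_cast hAtil
  have hliRows : LinearIndependent ℝ (fun i => (Atr * G) i) := by
    apply Matrix.linearIndependent_rows_iff_isUnit.mpr
    apply (Matrix.isUnit_iff_isUnit_det _).mpr
    rw [Matrix.det_mul]
    exact (mul_ne_zero hAtrdet hGdet).isUnit
  have hli : LinearIndependent ℝ ftil := by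
    have := hliRows.map' ((EuclideanSpace.equiv (Fin M) ℝ).symm.toLinearEquiv.toLinearMap)
      (LinearEquiv.ker _)
    convert this using 1
    funext i
    rw [hftil' i]
    rfl
    rfl
  -- pick the argmax k* over Iic m for L
  obtain ⟨ks, hksmem, hksval⟩ := Finset.exists_mem_eq_sup'
    (⟨m, Finset.mem_Iic.mpr le_rfl⟩ : (Finset.Iic m).Nonempty) (fun k => (L k k)^2)
  have hksm : ks ≤ m := Finset.mem_Iic.mp hksmem
  set V : Submodule ℝ (EuclideanSpace ℝ (Fin M)) := Submodule.span ℝ (f '' {j | j < ks}) with hV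
  have mem_of_proj : ∀ x, projPerp f ks x = 0 → x ∈ V := by
    intro x hx
    have hx' : Submodule.orthogonalProjectionOnto Vᗮ x = 0 := by
      apply Subtype.ext
      exact hx
    rw [Submodule.orthogonalProjectionOnto_eq_zero_iff] at hx'
    rwa [Submodule.orthogonal_orthogonal] at hx'
  -- there is some j ≤ ks with nonzero projection
  set Pset : Finset (Fin M) :=
    (Finset.Iic ks).filter (fun j => projPerp f ks (ftil j) ≠ 0) with hPset
  have hPne : Pset.Nonempty := by
    by_contra hne
    rw [Finset.not_nonempty_iff_eq_empty, Finset.filter_eq_empty_iff] at hne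
    have hmem : ∀ j : Fin M, j ≤ ks → ftil j ∈ V := by
      intro j hj
      have := hne (Finset.mem_Iic.mpr hj)
      push_neg at this
      exact mem_of_proj _ this
    -- the ks+1 independent vectors ftil 0, …, ftil ks all lie in V of dim ≤ ks
    set g : Fin (ks.1 + 1) → EuclideanSpace ℝ (Fin M) :=
      fun i => ftil ⟨i.1, lt_of_le_of_lt (Nat.lt_succ_iff.mp i.isLt) ks.isLt⟩ with hg
    have hgli : LinearIndependent ℝ g := by
      apply hli.comp
      intro a b hab
      have hv : a.1 = b.1 := by simpa using hab
      exact Fin.ext hv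
    have h1 : Module.finrank ℝ (Submodule.span ℝ (Set.range g)) = ks.1 + 1 := by
      rw [finrank_span_eq_card hgli, Fintype.card_fin]
    have hspanle : Submodule.span ℝ (Set.range g) ≤ V := by
      rw [Submodule.span_le]
      rintro x ⟨i, rfl⟩
      exact hmem _ (by exact_mod_cast Nat.lt_succ_iff.mp i.isLt)
    have h3 : Module.finrank ℝ V ≤ ks.1 := by
      set b : Fin ks.1 → EuclideanSpace ℝ (Fin M) :=
        fun i => f ⟨i.1, lt_trans i.isLt ks.isLt⟩ with hb
      have hVle : V ≤ Submodule.span ℝ (Set.range b) := by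
        rw [hV, Submodule.span_le]
        rintro x ⟨j, hj, rfl⟩
        apply Submodule.subset_span
        exact ⟨⟨j.1, hj⟩, by congr⟩
      calc Module.finrank ℝ V ≤ Module.finrank ℝ (Submodule.span ℝ (Set.range b)) :=
            Submodule.finrank_mono hVle
        _ ≤ Fintype.card (Fin ks.1) := finrank_range_le_card b
        _ = ks.1 := Fintype.card_fin _
    have h2 : Module.finrank ℝ (Submodule.span ℝ (Set.range g)) ≤ Module.finrank ℝ V :=
      Submodule.finrank_mono hspanle
    omega
  set j : Fin M := Pset.min' hPne with hj
  have hjP : j ∈ Pset := Pset.min'_mem hPne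
  have hjks : j ≤ ks := Finset.mem_Iic.mp (Finset.mem_filter.mp hjP).1
  have hjne : projPerp f ks (ftil j) ≠ 0 := (Finset.mem_filter.mp hjP).2
  have hmin : ∀ i : Fin M, i < j → ftil i ∈ V := by
    intro i hij
    apply mem_of_proj
    by_contra hne
    have : i ∈ Pset := Finset.mem_filter.mpr ⟨Finset.mem_Iic.mpr (le_of_lt (lt_of_lt_of_le hij hjks)), hne⟩
    exact absurd (Pset.min'_le i this) (not_le.mpr hij)
  -- the KZ step
  have step1 : L ks ks ≤ ‖projPerp f ks (ftil j)‖ := by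
    rw [hLd ks]
    exact hKZ1 ks (fun t => Atil j t) hjne
  -- the projection comparison step
  set W : Submodule ℝ (EuclideanSpace ℝ (Fin M)) :=
    Submodule.span ℝ (ftil '' {t | t < j}) with hW
  have hWV : W ≤ V := by
    rw [hW, Submodule.span_le]
    rintro x ⟨i, hi, rfl⟩
    exact hmin i hi
  have hsplit : ftil j = (Submodule.orthogonalProjectionOnto W (ftil j) : EuclideanSpace ℝ (Fin M))
      + (Submodule.orthogonalProjectionOnto Wᗮ (ftil j) : EuclideanSpace ℝ (Fin M)) :=
    (Submodule.starProjection_add_starProjection_orthogonal (K := W) (ftil j)).symm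
  have hPmem : (Submodule.orthogonalProjectionOnto W (ftil j) : EuclideanSpace ℝ (Fin M)) ∈ V :=
    hWV (Submodule.orthogonalProjectionOnto W (ftil j)).2
  have step2 : ‖projPerp f ks (ftil j)‖
      ≤ ‖(Submodule.orthogonalProjectionOnto Wᗮ (ftil j) : EuclideanSpace ℝ (Fin M))‖ := by
    have heq : projPerp f ks (ftil j)
        = (Submodule.orthogonalProjectionOnto Vᗮ ((Submodule.orthogonalProjectionOnto Wᗮ (ftil j) : EuclideanSpace ℝ (Fin M)))
            : EuclideanSpace ℝ (Fin M)) := by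
      show (Submodule.orthogonalProjectionOnto Vᗮ (ftil j) : EuclideanSpace ℝ (Fin M)) = _
      conv_lhs => rw [hsplit]
      rw [map_add, Submodule.orthogonalProjectionOnto_apply_of_mem_orthogonal
        (Submodule.le_orthogonal_orthogonal V hPmem)]
      simp
    rw [heq]
    calc ‖(Submodule.orthogonalProjectionOnto Vᗮ ((Submodule.orthogonalProjectionOnto Wᗮ (ftil j) : EuclideanSpace ℝ (Fin M)))
            : EuclideanSpace ℝ (Fin M))‖
        = ‖Submodule.orthogonalProjectionOnto Vᗮ ((Submodule.orthogonalProjectionOnto Wᗮ (ftil j)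
            : EuclideanSpace ℝ (Fin M)))‖ := rfl
      _ ≤ 1 * ‖(Submodule.orthogonalProjectionOnto Wᗮ (ftil j) : EuclideanSpace ℝ (Fin M))‖ :=
          ContinuousLinearMap.le_of_opNorm_le _ (Submodule.orthogonalProjectionOnto_norm_le _) _
      _ = _ := one_mul _
  have step3 : ‖(Submodule.orthogonalProjectionOnto Wᗮ (ftil j) : EuclideanSpace ℝ (Fin M))‖ = Ltil j j := by
    rw [hLtd j]
    rfl
  have hchain : L ks ks ≤ Ltil j j := by
    rw [← step3]
    exact le_trans step1 step2
  -- conclude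
  rw [hksval]
  have hjm : j ∈ Finset.Iic m := Finset.mem_Iic.mpr (le_trans hjks hksm)
  refine le_trans ?_ (Finset.le_sup' (fun k => (Ltil k k)^2) hjm)
  exact pow_le_pow_left₀ (hLdiag ks).le hchain 2
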